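/- Let H = (V, E) be an r-uniform hypergraph with r ≥ 2, let F ∈ ℝ^{V×V} be a symmetric matrix with diagonal f such that the bordered matrix M(F) = [[1, fᵀ],[f, F]] is positive semidefinite, and suppose that for every x ∈ V and every clique C of H containing x with |C| ≥ r, one has ∑_{y ∈ C \ {x}} F(x,y) ≤ (r−2)·F(x,x). Then for every clique C of H with |C| ≥ r, f(C) = ∑_{x∈C} f(x) ≤ r − 1. -/

import Mathlib

/-- The bordered matrix `M(F) = [[1, fᵀ],[f, F]]`, where `f = diag F`. -/
def borderM {V : Type*} (F : Matrix V V ℝ) : Matrix (Option V) (Option V) ℝ :=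
  Matrix.of fun i j =>
    match i, j with
    | none, none => 1
    | none, some y => F y y
    | some x, none => F x x
    | some x, some y => F x y

/-- If `H = (V,E)` is an `r`-uniform hypergraph with `r ≥ 2`,
`F` is a symmetric matrix whose bordered matrix is positive semidefinite, and
for every `x` and every clique `C ∋ x` with `|C| ≥ r` one has
`∑_{y ∈ C \ {x}} F(x,y) ≤ (r-2) F(x,x)`, then every clique `C` with `|C| ≥ r`
satisfies `∑_{x ∈ C} F(x,x) ≤ r - 1`. -/
theorem clique_inequality_of_link_condition {V : Type*} [Fintype V] [DecidableEq V]
    (r : ℕ) (hr : 2 ≤ r) (E : Finset (Finset V)) (hE : ∀ e ∈ E, e.card = r)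
    (F : Matrix V V ℝ) (hFsym : F.IsSymm)
    (hPSD : (borderM F).PosSemidef)
    (hrow : ∀ x : V, ∀ C : Finset V, (∀ S ⊆ C, S.card = r → S ∈ E) →
      x ∈ C → r ≤ C.card → ∑ y ∈ C.erase x, F x y ≤ ((r : ℝ) - 2) * F x x) :
    ∀ C : Finset V, (∀ S ⊆ C, S.card = r → S ∈ E) → r ≤ C.card →
      ∑ x ∈ C, F x x ≤ (r : ℝ) - 1 := by
  intro C hC hcard
  by_contra hlt
  push_neg at hlt
  set S : ℝ := ∑ x ∈ C, F x x with hSdef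
  have h2 : (2 : ℝ) ≤ (r : ℝ) := by exact_mod_cast hr
  have hSpos : 0 < S := lt_trans (by linarith) hlt
  set s : ℝ := -1 / S with hsdef
  have hsS : s * S = -1 := by
    rw [hsdef, div_mul_cancel₀ _ hSpos.ne']
  set Q : ℝ := ∑ x ∈ C, ∑ y ∈ C, F x y with hQdef
  have hQ : Q ≤ ((r : ℝ) - 1) * S := by
    have h1 : Q = ∑ x ∈ C, (F x x + ∑ y ∈ C.erase x, F x y) := by
      refine Finset.sum_congr rfl fun x hx => ?_
      rw [Finset.add_sum_erase _ _ hx]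
    rw [h1]
    calc ∑ x ∈ C, (F x x + ∑ y ∈ C.erase x, F x y)
        ≤ ∑ x ∈ C, (F x x + ((r : ℝ) - 2) * F x x) := by
          refine Finset.sum_le_sum fun x hx => ?_
          have := hrow x C hC hx hcard
          linarith
      _ = ((r : ℝ) - 1) * S := by
          rw [hSdef, Finset.mul_sum]
          refine Finset.sum_congr rfl fun x hx => ?_
          ring
  set v : Option V → ℝ := fun i => Option.elim i 1 (fun x => if x ∈ C then s else 0) with hvdef
  have h0 := hPSD.dotProduct_mulVec_nonneg v
  have key : dotProduct (star v) ((borderM F).mulVec v) = 1 + 2 * (s * S) + s ^ 2 * Q := by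
    simp only [dotProduct, Matrix.mulVec, borderM, Fintype.sum_option,
      Matrix.of_apply, hvdef, Option.elim, star_trivial, Pi.star_apply]
    simp only [mul_ite, ite_mul, mul_zero, zero_mul, mul_one, one_mul,
      Finset.sum_ite_mem, Finset.univ_inter]
    rw [hSdef, hQdef]
    simp only [mul_add, Finset.mul_sum, Finset.sum_add_distrib]
    have A : ∑ x ∈ C, F x x * s + ∑ x ∈ C, s * F x x = ∑ i ∈ C, 2 * (s * F i i) := by
      rw [← Finset.sum_add_distrib]
      exact Finset.sum_congr rfl fun x _ => by ring
    have B : ∑ x ∈ C, ∑ y ∈ C, s * (F x y * s) = ∑ x ∈ C, ∑ y ∈ C, s ^ 2 * F x y := by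
      refine Finset.sum_congr rfl fun x _ => ?_
      exact Finset.sum_congr rfl fun y _ => by ring
    linarith [A, B]
  rw [key] at h0
  -- multiply by S^2 > 0
  have hS2 : (0:ℝ) < S ^ 2 := by positivity
  have hq2 : 0 ≤ (1 + 2 * (s * S) + s ^ 2 * Q) * S ^ 2 := by positivity
  have hmain : S ^ 2 ≤ Q := by
    have expand : (1 + 2 * (s * S) + s ^ 2 * Q) * S ^ 2
        = S ^ 2 + 2 * (s * S) * S ^ 2 + (s * S) ^ 2 * Q := by ring
    rw [expand, hsS] at hq2
    nlinarith
  nlinarith
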